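/- Suppose the partition has spectral gap at least Λ > 0, and let ω > 0 and α > 0 be such that γ = ((1+α)/α)·(ω/Λ) < 1. Then for every f ∈ PW_ω(L), ((1−γ)/(1+α))·‖f‖² ≤ ∑_j |⟨f, ξ_j⟩|² ≤ ‖f‖². -/

import Mathlib

open Finset

noncomputable section

namespace Stmt12

set_option linter.unusedSectionVars false

variable {V : Type*} [Fintype V]

def ip (f g : V → ℂ) : ℂ := ∑ v, f v * (starRingEnd ℂ) (g v)

def Lc (w : V → V → ℝ) (f : V → ℂ) (v : V) : ℂ := ∑ u, (f v - f u) * (w v u : ℂ)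

lemma conj_mul' (z : ℂ) : z * (starRingEnd ℂ) z = ((‖z‖ ^ 2 : ℝ) : ℂ) := by
  rw [Complex.mul_conj]; norm_cast
  simp [Complex.normSq_eq_norm_sq]

lemma ip_self (f : V → ℂ) : ip f f = ((∑ v, ‖f v‖ ^ 2 : ℝ) : ℂ) := by
  unfold ip
  push_cast
  refine Finset.sum_congr rfl fun v _ => ?_
  rw [conj_mul']
  push_cast
  ring

lemma ip_L (w : V → V → ℝ) (hsymm : ∀ u v, w u v = w v u) (f g : V → ℂ) :
    ip (Lc w f) g = ip f (Lc w g) := by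
  unfold ip Lc
  have key : ∑ v, ∑ u, f u * (w v u : ℂ) * (starRingEnd ℂ) (g v)
      = ∑ v, ∑ u, f v * (w v u : ℂ) * (starRingEnd ℂ) (g u) := by
    rw [Finset.sum_comm]
    refine Finset.sum_congr rfl fun v _ => Finset.sum_congr rfl fun u _ => ?_
    rw [hsymm]
  calc ∑ v, (∑ u, (f v - f u) * (w v u : ℂ)) * (starRingEnd ℂ) (g v)
      = ∑ v, ∑ u, (f v * (w v u : ℂ) * (starRingEnd ℂ) (g v)
          - f u * (w v u : ℂ) * (starRingEnd ℂ) (g v)) := by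
        refine Finset.sum_congr rfl fun v _ => ?_
        rw [Finset.sum_mul]
        exact Finset.sum_congr rfl fun u _ => by ring
    _ = ∑ v, ∑ u, (f v * (w v u : ℂ) * (starRingEnd ℂ) (g v)
          - f v * (w v u : ℂ) * (starRingEnd ℂ) (g u)) := by
        simp only [Finset.sum_sub_distrib]
        rw [key]
    _ = ∑ v, f v * (starRingEnd ℂ) (∑ u, (g v - g u) * (w v u : ℂ)) := by
        refine Finset.sum_congr rfl fun v _ => ?_
        rw [map_sum, Finset.mul_sum]
        refine Finset.sum_congr rfl fun u _ => ?_
        rw [map_mul, map_sub, Complex.conj_ofReal]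
        ring

lemma ip_L_self (w : V → V → ℝ) (hsymm : ∀ u v, w u v = w v u) (f : V → ℂ) :
    ip (Lc w f) f = ((1/2 * ∑ v, ∑ u, ‖f v - f u‖ ^ 2 * w v u : ℝ) : ℂ) := by
  unfold ip Lc
  have e1 : ∀ h : V → ℂ, ∑ v, (∑ u, (h v - h u) * (w v u : ℂ)) * (starRingEnd ℂ) (h v)
      = ∑ v, ∑ u, (h v - h u) * (w v u : ℂ) * (starRingEnd ℂ) (h v) := by
    intro h
    exact Finset.sum_congr rfl fun v _ => by rw [Finset.sum_mul]
  rw [e1]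
  have e2 : ∑ v, ∑ u, (f v - f u) * (w v u : ℂ) * (starRingEnd ℂ) (f v)
      = ∑ v, ∑ u, (f u - f v) * (w v u : ℂ) * (starRingEnd ℂ) (f u) := by
    rw [Finset.sum_comm]
    refine Finset.sum_congr rfl fun v _ => Finset.sum_congr rfl fun u _ => by rw [hsymm]
  have e3 : (2 : ℂ) * ∑ v, ∑ u, (f v - f u) * (w v u : ℂ) * (starRingEnd ℂ) (f v)
      = ∑ v, ∑ u, ((‖f v - f u‖ ^ 2 * w v u : ℝ) : ℂ) := by
    rw [two_mul]
    nth_rewrite 2 [e2]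
    rw [← Finset.sum_add_distrib]
    refine Finset.sum_congr rfl fun v _ => ?_
    rw [← Finset.sum_add_distrib]
    refine Finset.sum_congr rfl fun u _ => ?_
    have h : (f v - f u) * (w v u : ℂ) * (starRingEnd ℂ) (f v)
        + (f u - f v) * (w v u : ℂ) * (starRingEnd ℂ) (f u)
        = ((f v - f u) * (starRingEnd ℂ) (f v - f u)) * (w v u : ℂ) := by
      rw [map_sub]; ring
    rw [h, conj_mul']
    push_cast
    ring
  push_cast at e3 ⊢
  linear_combination (1/2 : ℂ) * e3

lemma Lc_sum (w : V → V → ℝ) {ι : Type*} (s : Finset ι) (c : ι → ℂ) (g : ι → V → ℂ) (v : V) :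
    Lc w (fun x => ∑ i ∈ s, c i * g i x) v = ∑ i ∈ s, c i * Lc w (g i) v := by
  unfold Lc
  have h : ∀ u, ((∑ i ∈ s, c i * g i v) - ∑ i ∈ s, c i * g i u) * (w v u : ℂ)
      = ∑ i ∈ s, c i * ((g i v - g i u) * (w v u : ℂ)) := by
    intro u
    rw [← Finset.sum_sub_distrib, Finset.sum_mul]
    exact Finset.sum_congr rfl fun i _ => by ring
  simp only [h]
  rw [Finset.sum_comm]
  exact Finset.sum_congr rfl fun i _ => by rw [Finset.mul_sum]

lemma ip_sum_sum {ι : Type*} (s : Finset ι) (F G : ι → V → ℂ) :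
    ip (fun v => ∑ i ∈ s, F i v) (fun v => ∑ i ∈ s, G i v)
      = ∑ i ∈ s, ∑ k ∈ s, ip (F i) (G k) := by
  unfold ip
  have h : ∀ v, (∑ i ∈ s, F i v) * (starRingEnd ℂ) (∑ k ∈ s, G k v)
      = ∑ i ∈ s, ∑ k ∈ s, F i v * (starRingEnd ℂ) (G k v) := by
    intro v
    rw [map_sum, Finset.sum_mul_sum]
  simp only [h]
  rw [Finset.sum_comm]
  exact Finset.sum_congr rfl fun i _ => Finset.sum_comm

lemma spectral (w : V → V → ℝ) (hsymm : ∀ u v, w u v = w v u) (ω : ℝ) (f : V → ℂ)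
    (hf : f ∈ Submodule.span ℂ {g : V → ℂ | ∃ c : ℝ, 0 ≤ c ∧ c ≤ ω ∧
      ∀ v, ∑ u, (g v - g u) * (w v u : ℂ) = (c : ℂ) * g v}) :
    (ip (Lc w f) f).re ≤ ω * ∑ v, ‖f v‖ ^ 2 := by
  classical
  obtain ⟨n, c, G, hG⟩ := Submodule.mem_span_set'.mp hf
  choose lam hlam0 hlamω heig using fun i => (G i).2
  set F : Fin n → V → ℂ := fun i => (G i : V → ℂ) with hF
  set T : Finset ℝ := Finset.image lam Finset.univ with hT
  set Φ : ℝ → V → ℂ := fun t v => ∑ i ∈ Finset.univ.filter (fun i => lam i = t), c i * F i v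
    with hΦ
  have hfeq : f = fun v => ∑ t ∈ T, Φ t v := by
    funext v
    rw [← hG]
    have h : (∑ i, c i • (G i : V → ℂ)) v = ∑ i, c i * F i v := by
      simp [hF]
    rw [h]
    exact (Finset.sum_fiberwise_of_maps_to (fun i _ => Finset.mem_image_of_mem lam
      (Finset.mem_univ i)) _).symm
  have hLF : ∀ i v, Lc w (F i) v = (lam i : ℂ) * F i v := fun i v => heig i v
  have hLΦ : ∀ t v, Lc w (Φ t) v = (t : ℂ) * Φ t v := by
    intro t v
    rw [hΦ]
    rw [Lc_sum, Finset.mul_sum]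
    refine Finset.sum_congr rfl fun i hi => ?_
    rw [hLF]
    have h : lam i = t := (Finset.mem_filter.mp hi).2
    rw [h]; ring
  have hipl : ∀ s t : ℝ, ip (Lc w (Φ s)) (Φ t) = (s : ℂ) * ip (Φ s) (Φ t) := by
    intro s t
    unfold ip
    rw [Finset.mul_sum]
    refine Finset.sum_congr rfl fun v _ => ?_
    rw [hLΦ]; ring
  have hipr : ∀ s t : ℝ, ip (Φ s) (Lc w (Φ t)) = (t : ℂ) * ip (Φ s) (Φ t) := by
    intro s t
    unfold ip
    rw [Finset.mul_sum]
    refine Finset.sum_congr rfl fun v _ => ?_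
    rw [hLΦ, map_mul, Complex.conj_ofReal]; ring
  have horth : ∀ s t : ℝ, s ≠ t → ip (Φ s) (Φ t) = 0 := by
    intro s t hst
    have h1 : (s : ℂ) * ip (Φ s) (Φ t) = (t : ℂ) * ip (Φ s) (Φ t) := by
      rw [← hipl, ip_L w hsymm, hipr]
    have h2 : ((s : ℂ) - t) * ip (Φ s) (Φ t) = 0 := by linear_combination h1
    rcases mul_eq_zero.mp h2 with h | h
    · exact absurd (by exact_mod_cast sub_eq_zero.mp h) hst
    · exact h
  have hipff : ip f f = ∑ t ∈ T, ip (Φ t) (Φ t) := by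
    rw [hfeq, ip_sum_sum]
    refine Finset.sum_congr rfl fun s hs => ?_
    rw [Finset.sum_eq_single_of_mem s hs (fun t _ hts => horth s t (Ne.symm hts))]
  have hipLff : ip (Lc w f) f = ∑ t ∈ T, (t : ℂ) * ip (Φ t) (Φ t) := by
    set Ψ : ℝ → V → ℂ := fun t v => (t:ℂ) * Φ t v with hΨ
    have hLf : Lc w f = fun v => ∑ t ∈ T, Ψ t v := by
      funext v
      rw [hfeq]
      have h := Lc_sum w T (fun t => (1:ℂ)) Φ v
      simp only [one_mul] at h
      rw [h]
      exact Finset.sum_congr rfl fun t _ => hLΦ t v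
    rw [hLf, hfeq, ip_sum_sum]
    refine Finset.sum_congr rfl fun s hs => ?_
    have hterm : ∀ t, ip (Ψ s) (Φ t) = (s:ℂ) * ip (Φ s) (Φ t) := by
      intro t; unfold ip; rw [Finset.mul_sum]
      exact Finset.sum_congr rfl fun v _ => by simp only [hΨ]; ring
    rw [Finset.sum_eq_single_of_mem s hs
      (fun t _ hts => by rw [hterm, horth s t (Ne.symm hts), mul_zero])]
    rw [hterm]
  have hN : ∀ t : ℝ, ip (Φ t) (Φ t) = ((∑ v, ‖Φ t v‖ ^ 2 : ℝ) : ℂ) := fun t => ip_self _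
  have hNnn : ∀ t : ℝ, 0 ≤ ∑ v, ‖Φ t v‖ ^ 2 := fun t =>
    Finset.sum_nonneg fun v _ => sq_nonneg _
  have hre : (ip (Lc w f) f).re = ∑ t ∈ T, t * ∑ v, ‖Φ t v‖ ^ 2 := by
    rw [hipLff, Complex.re_sum]
    refine Finset.sum_congr rfl fun t _ => ?_
    rw [hN, ← Complex.ofReal_mul, Complex.ofReal_re]
  have hre2 : ∑ v, ‖f v‖ ^ 2 = ∑ t ∈ T, ∑ v, ‖Φ t v‖ ^ 2 := by
    have h1 : ((∑ v, ‖f v‖ ^ 2 : ℝ) : ℂ) = ((∑ t ∈ T, ∑ v, ‖Φ t v‖ ^ 2 : ℝ) : ℂ) := by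
      rw [← ip_self, hipff, Complex.ofReal_sum]
      exact Finset.sum_congr rfl fun t _ => hN t
    exact_mod_cast h1
  rw [hre, hre2, Finset.mul_sum]
  refine Finset.sum_le_sum fun t ht => ?_
  obtain ⟨i, _, hi⟩ := Finset.mem_image.mp ht
  exact mul_le_mul_of_nonneg_right (hi ▸ hlamω i) (hNnn t)

lemma pythag (s : Finset V) (a : ℂ) (g : V → ℂ) (hg : ∑ v ∈ s, g v = 0) :
    ∑ v ∈ s, ‖a + g v‖ ^ 2 = s.card * ‖a‖ ^ 2 + ∑ v ∈ s, ‖g v‖ ^ 2 := by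
  have e : ∀ v, ((‖a + g v‖ ^ 2 : ℝ) : ℂ)
      = a * (starRingEnd ℂ) a + (a * (starRingEnd ℂ) (g v)
        + (g v * (starRingEnd ℂ) a + g v * (starRingEnd ℂ) (g v))) := by
    intro v; rw [← conj_mul', map_add]; ring
  have key : ((∑ v ∈ s, ‖a + g v‖ ^ 2 : ℝ) : ℂ)
      = ((s.card * ‖a‖ ^ 2 + ∑ v ∈ s, ‖g v‖ ^ 2 : ℝ) : ℂ) := by
    rw [Complex.ofReal_sum]
    simp only [e]
    rw [Finset.sum_add_distrib, Finset.sum_add_distrib, Finset.sum_add_distrib,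
      Finset.sum_const, ← Finset.mul_sum, ← Finset.sum_mul, ← map_sum, hg]
    simp only [map_zero, mul_zero, zero_mul, add_zero, zero_add]
    rw [conj_mul']
    push_cast
    congr 1
    · rw [nsmul_eq_mul]
    · exact Finset.sum_congr rfl fun v _ => by rw [conj_mul']; push_cast; ring
  exact_mod_cast key

end Stmt12

open Stmt12

/-- Let `(V, w)` be a finite weighted graph with Laplacian `L`, and
let `{Ω_j}_{j∈J}` be a partition of `V` into nonempty subsets with spectral gap at
least `Λ > 0`.  Let `ω > 0` and `α > 0` be such that `γ = ((1+α)/α)·(ω/Λ) < 1`.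
Then for every `f` in the Paley–Wiener space `PW_ω(L)` (the span of eigenvectors of
`L` with eigenvalue in `[0, ω]`),
`((1−γ)/(1+α))·‖f‖² ≤ ∑_j |⟨f, ξ_j⟩|² ≤ ‖f‖²`,
where `⟨f, ξ_j⟩ = |Ω_j|^{-1/2}·∑_{v∈Ω_j} f(v)`. -/
theorem stmt_12 {V : Type*} [Fintype V] {J : Type*} [Fintype J] (w : V → V → ℝ)
    (hsymm : ∀ u v, w u v = w v u) (hnn : ∀ u v, 0 ≤ w u v)
    (hdiag : ∀ v, w v v = 0)
    (Ω : J → Finset V) (hne : ∀ j, (Ω j).Nonempty)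
    (hdisj : ∀ i j, i ≠ j → Disjoint (Ω i) (Ω j)) (hcover : ∀ v : V, ∃ j, v ∈ Ω j)
    (Λ : ℝ) (hΛ : 0 < Λ)
    (hgap : ∀ j, ∀ g : V → ℂ, ∑ v ∈ Ω j, g v = 0 →
      Λ * ∑ v ∈ Ω j, ‖g v‖ ^ 2 ≤
        1 / 2 * ∑ u ∈ Ω j, ∑ v ∈ Ω j, ‖g u - g v‖ ^ 2 * w u v)
    (ω α : ℝ) (hω : 0 < ω) (hα : 0 < α)
    (hγ : (1 + α) / α * (ω / Λ) < 1)
    (f : V → ℂ)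
    (hf : f ∈ Submodule.span ℂ {g : V → ℂ | ∃ c : ℝ, 0 ≤ c ∧ c ≤ ω ∧
      ∀ v, ∑ u, (g v - g u) * (w v u : ℂ) = (c : ℂ) * g v}) :
    ((1 - (1 + α) / α * (ω / Λ)) / (1 + α) * ∑ v, ‖f v‖ ^ 2 ≤
        ∑ j, ((Ω j).card : ℝ)⁻¹ * ‖∑ v ∈ Ω j, f v‖ ^ 2) ∧
      ∑ j, ((Ω j).card : ℝ)⁻¹ * ‖∑ v ∈ Ω j, f v‖ ^ 2 ≤ ∑ v, ‖f v‖ ^ 2 := by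
  classical
  -- index map
  choose jdx hjdx using hcover
  have huniq : ∀ v j, v ∈ Ω j → j = jdx v := by
    intro v j hv
    by_contra h
    exact (Finset.disjoint_left.mp (hdisj j (jdx v) h) hv) (hjdx v)
  have hpart : ∀ (h : V → ℝ), ∑ j, ∑ v ∈ Ω j, h v = ∑ v, h v := by
    intro h
    have hΩ : ∀ j, Ω j = Finset.univ.filter (fun v => jdx v = j) := by
      intro j
      ext v
      simp only [Finset.mem_filter, Finset.mem_univ, true_and]
      constructor
      · intro hv; exact (huniq v j hv).symm
      · rintro rfl; exact hjdx v
    calc ∑ j, ∑ v ∈ Ω j, h v = ∑ j, ∑ v ∈ Finset.univ.filter (fun v => jdx v = j), h v := by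
          exact Finset.sum_congr rfl fun j _ => by rw [← hΩ]
      _ = ∑ v, h v := Finset.sum_fiberwise_of_maps_to (fun v _ => Finset.mem_univ (jdx v)) _
  have hcard : ∀ j, (0:ℝ) < (Ω j).card := fun j => by
    exact_mod_cast Finset.card_pos.mpr (hne j)
  set a : J → ℂ := fun j => (∑ v ∈ Ω j, f v) / ((Ω j).card : ℂ) with ha
  set g : V → ℂ := fun v => f v - a (jdx v) with hgdef
  have hcardC : ∀ j, ((Ω j).card : ℂ) ≠ 0 := fun j => by
    exact_mod_cast (hcard j).ne'
  have hsumf : ∀ j, ∑ v ∈ Ω j, f v = ((Ω j).card : ℂ) * a j := by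
    intro j
    rw [ha]
    simp only
    rw [mul_comm, div_mul_cancel₀ _ (hcardC j)]
  have hgj : ∀ j, ∀ v ∈ Ω j, g v = f v - a j := by
    intro j v hv
    rw [hgdef]
    simp only
    rw [← huniq v j hv]
  have hg0 : ∀ j, ∑ v ∈ Ω j, g v = 0 := by
    intro j
    rw [Finset.sum_congr rfl (hgj j), Finset.sum_sub_distrib, Finset.sum_const,
      hsumf, nsmul_eq_mul]
    ring
  -- Pythagoras per part
  have hpy : ∀ j, ∑ v ∈ Ω j, ‖f v‖ ^ 2
      = (Ω j).card * ‖a j‖ ^ 2 + ∑ v ∈ Ω j, ‖g v‖ ^ 2 := by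
    intro j
    have h1 : ∑ v ∈ Ω j, ‖f v‖ ^ 2 = ∑ v ∈ Ω j, ‖a j + g v‖ ^ 2 := by
      refine Finset.sum_congr rfl fun v hv => ?_
      rw [hgj j v hv]
      ring_nf
    rw [h1, pythag _ _ _ (hg0 j)]
  -- identify the frame sum
  have hA : ∀ j, ((Ω j).card : ℝ)⁻¹ * ‖∑ v ∈ Ω j, f v‖ ^ 2 = (Ω j).card * ‖a j‖ ^ 2 := by
    intro j
    rw [hsumf, norm_mul]
    have : ‖((Ω j).card : ℂ)‖ = ((Ω j).card : ℝ) := by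
      simp
    rw [this, mul_pow]
    rw [inv_mul_eq_div, div_eq_iff (hcard j).ne']
    ring
  set A : ℝ := ∑ j, ((Ω j).card : ℝ)⁻¹ * ‖∑ v ∈ Ω j, f v‖ ^ 2 with hAdef
  set N : ℝ := ∑ v, ‖f v‖ ^ 2 with hNdef
  set Gn : ℝ := ∑ v, ‖g v‖ ^ 2 with hGdef
  have hNAG : N = A + Gn := by
    rw [hNdef, ← hpart (fun v => ‖f v‖ ^ 2), hAdef, hGdef, ← hpart (fun v => ‖g v‖ ^ 2),
      ← Finset.sum_add_distrib]
    refine Finset.sum_congr rfl fun j _ => ?_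
    rw [hA, hpy]
  have hGnn : 0 ≤ Gn := Finset.sum_nonneg fun v _ => sq_nonneg _
  have hNnn : 0 ≤ N := Finset.sum_nonneg fun v _ => sq_nonneg _
  -- spectral gap bound
  have hgap2 : Λ * Gn ≤ 1/2 * ∑ u, ∑ v, ‖f u - f v‖ ^ 2 * w u v := by
    have h1 : ∀ j, Λ * ∑ v ∈ Ω j, ‖g v‖ ^ 2
        ≤ 1/2 * ∑ u ∈ Ω j, ∑ v ∈ Ω j, ‖f u - f v‖ ^ 2 * w u v := by
      intro j
      have h2 := hgap j g (hg0 j)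
      have h3 : ∑ u ∈ Ω j, ∑ v ∈ Ω j, ‖g u - g v‖ ^ 2 * w u v
          = ∑ u ∈ Ω j, ∑ v ∈ Ω j, ‖f u - f v‖ ^ 2 * w u v := by
        refine Finset.sum_congr rfl fun u hu => Finset.sum_congr rfl fun v hv => ?_
        rw [hgj j u hu, hgj j v hv]
        congr 2
        ring
      rwa [h3] at h2
    have h4 : ∀ j, 1/2 * ∑ u ∈ Ω j, ∑ v ∈ Ω j, ‖f u - f v‖ ^ 2 * w u v
        ≤ 1/2 * ∑ u ∈ Ω j, ∑ v, ‖f u - f v‖ ^ 2 * w u v := by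
      intro j
      refine mul_le_mul_of_nonneg_left (Finset.sum_le_sum fun u _ => ?_) (by norm_num)
      refine Finset.sum_le_sum_of_subset_of_nonneg (Finset.subset_univ _) fun v _ _ => ?_
      exact mul_nonneg (sq_nonneg _) (hnn u v)
    calc Λ * Gn = ∑ j, Λ * ∑ v ∈ Ω j, ‖g v‖ ^ 2 := by
          rw [hGdef, ← hpart (fun v => ‖g v‖ ^ 2), Finset.mul_sum]
      _ ≤ ∑ j, 1/2 * ∑ u ∈ Ω j, ∑ v, ‖f u - f v‖ ^ 2 * w u v :=
          Finset.sum_le_sum fun j _ => le_trans (h1 j) (h4 j)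
      _ = 1/2 * ∑ u, ∑ v, ‖f u - f v‖ ^ 2 * w u v := by
          rw [← Finset.mul_sum, hpart (fun u => ∑ v, ‖f u - f v‖ ^ 2 * w u v)]
  -- spectral bound
  have hspec : 1/2 * ∑ u, ∑ v, ‖f u - f v‖ ^ 2 * w u v ≤ ω * N := by
    have h1 := spectral w hsymm ω f hf
    have h2 := ip_L_self w hsymm f
    rw [h2, Complex.ofReal_re] at h1
    exact h1
  have hΛG : Λ * Gn ≤ ω * N := le_trans hgap2 hspec
  -- arithmetic
  have hG_le : Gn ≤ ω / Λ * N := by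
    rw [div_mul_eq_mul_div, le_div_iff₀ hΛ]
    nlinarith
  constructor
  · have hr1 : ω / Λ < 1 := by
      have h5 : (1:ℝ) < (1 + α) / α := by
        rw [lt_div_iff₀ hα]; linarith
      nlinarith [div_pos hω hΛ]
    have hkey : (1 - (1 + α) / α * (ω / Λ)) / (1 + α) ≤ 1 - ω / Λ := by
      rw [div_le_iff₀ (by linarith : (0:ℝ) < 1 + α)]
      have hr0 : 0 ≤ ω / Λ := le_of_lt (div_pos hω hΛ)
      have e : (1 + α) / α * (ω / Λ) = ω / Λ + ω / Λ / α := by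
        field_simp; ring
      rw [e]
      have h6 : 0 ≤ ω / Λ / α := div_nonneg hr0 (le_of_lt hα)
      nlinarith
    have hlow : (1 - ω / Λ) * N ≤ A := by nlinarith
    calc (1 - (1 + α) / α * (ω / Λ)) / (1 + α) * N ≤ (1 - ω / Λ) * N :=
          mul_le_mul_of_nonneg_right hkey hNnn
      _ ≤ A := hlow
  · linarith [hNAG, hGnn]
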